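/- For A ∈ ℂ^{m×n} and Hermitian B ∈ ℂ^{m×m}, the equation AXA* = B has a Hermitian solution X if and only if the column space of B is contained in the column space of A (equivalently AA†B = B); moreover, when this holds, X = A†B(A†)* + (I − A†A)V + V*(I − A†A) is a Hermitian solution for every V with the appropriate symmetry making X Hermitian, and in particular X₀ = A†B(A†)* is a Hermitian solution. -/

import Mathlib

open Matrix
open scoped ComplexOrder

def IsMoorePenrose {m n : Type*} [Fintype m] [Fintype n]
    (A : Matrix m n ℂ) (X : Matrix n m ℂ) : Prop :=
  A * X * A = A ∧ X * A * X = X ∧ (A * X)ᴴ = A * X ∧ (X * A)ᴴ = X * A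

open Classical in
noncomputable def pinv {m n : Type*} [Fintype m] [Fintype n]
    (A : Matrix m n ℂ) : Matrix n m ℂ :=
  if h : ∃ X, IsMoorePenrose A X then h.choose else 0

lemma sandwich_mul {n : Type*} [Fintype n] [DecidableEq n] {U : Matrix n n ℂ}
    (hUU' : star U * U = 1) (D₁ D₂ : Matrix n n ℂ) :
    (U * D₁ * star U) * (U * D₂ * star U) = U * (D₁ * D₂) * star U := by
  have h1 : U * D₁ * star U * (U * D₂ * star U) = U * D₁ * (star U * U) * (D₂ * star U) := by
    simp only [Matrix.mul_assoc]
  rw [h1, hUU', Matrix.mul_one]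
  simp only [Matrix.mul_assoc]

/-- Pseudoinverse of a Hermitian matrix via spectral decomposition. -/
lemma herm_pinv_exists {n : Type*} [Fintype n] [DecidableEq n]
    (G : Matrix n n ℂ) (hG : G.IsHermitian) :
    ∃ Y : Matrix n n ℂ, G * Y * G = G ∧ Y * G * Y = Y ∧ Yᴴ = Y ∧ G * Y = Y * G := by
  set U : Matrix n n ℂ := (hG.eigenvectorUnitary : Matrix n n ℂ) with hU
  have hUU' : star U * U = 1 := (Matrix.mem_unitaryGroup_iff').mp hG.eigenvectorUnitary.2
  set d : n → ℂ := RCLike.ofReal ∘ hG.eigenvalues with hd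
  set f : n → ℂ := fun i => (d i)⁻¹ with hf
  have hspec : G = U * diagonal d * star U := hG.spectral_theorem
  set D : Matrix n n ℂ := diagonal d with hD
  set D' : Matrix n n ℂ := diagonal f with hD'
  -- diagonal identities
  have e1 : D * D' * D = D := by
    rw [hD, hD', diagonal_mul_diagonal, diagonal_mul_diagonal]
    have : (fun i => d i * f i * d i) = d := by
      funext i
      by_cases h : d i = 0
      · simp [hf, Pi.mul_apply, h]
      · field_simp [hf, Pi.mul_apply, h]
        exact mul_inv_cancel₀ h
    rw [this]
  have e2 : D' * D * D' = D' := by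
    rw [hD, hD', diagonal_mul_diagonal, diagonal_mul_diagonal]
    have : (fun i => f i * d i * f i) = f := by
      funext i
      by_cases h : d i = 0
      · simp [hf, Pi.mul_apply, h]
      · field_simp [hf, Pi.mul_apply, h]
        exact inv_mul_cancel₀ h
    rw [this]
  have e3 : D * D' = D' * D := by
    rw [hD, hD', diagonal_mul_diagonal, diagonal_mul_diagonal]
    have : (fun i => d i * f i) = fun i => f i * d i := by
      funext i
      exact mul_comm _ _
    rw [this]
  have hD'H : D'ᴴ = D' := by
    rw [hD', diagonal_conjTranspose]
    have : (star f) = f := by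
      funext i
      simp [hf, hd, ← Complex.ofReal_inv, Complex.conj_ofReal]
    rw [this]
  refine ⟨U * D' * star U, ?_, ?_, ?_, ?_⟩
  · calc G * (U * D' * star U) * G
        = ((U * D * star U) * (U * D' * star U)) * (U * D * star U) := by rw [← hspec]
    _ = (U * (D * D') * star U) * (U * D * star U) := by rw [sandwich_mul hUU']
    _ = U * (D * D' * D) * star U := by rw [sandwich_mul hUU']
    _ = U * D * star U := by rw [e1]
    _ = G := hspec.symm
  · calc (U * D' * star U) * G * (U * D' * star U)
        = ((U * D' * star U) * (U * D * star U)) * (U * D' * star U) := by rw [← hspec]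
    _ = (U * (D' * D) * star U) * (U * D' * star U) := by rw [sandwich_mul hUU']
    _ = U * (D' * D * D') * star U := by rw [sandwich_mul hUU']
    _ = U * D' * star U := by rw [e2]
  · calc (U * D' * star U)ᴴ
        = (star U)ᴴ * (D'ᴴ * Uᴴ) := by rw [conjTranspose_mul, conjTranspose_mul]
    _ = U * D' * star U := by
        rw [hD'H, Matrix.star_eq_conjTranspose, conjTranspose_conjTranspose, Matrix.mul_assoc]
  · calc G * (U * D' * star U)
        = (U * D * star U) * (U * D' * star U) := by rw [← hspec]
    _ = U * (D * D') * star U := by rw [sandwich_mul hUU']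
    _ = U * (D' * D) * star U := by rw [e3]
    _ = (U * D' * star U) * (U * D * star U) := by rw [sandwich_mul hUU']
    _ = (U * D' * star U) * G := by rw [← hspec]

/-- Every complex matrix has a Moore–Penrose inverse. -/
lemma exists_isMoorePenrose {m n : Type*} [Fintype m] [Fintype n] [DecidableEq n]
    (A : Matrix m n ℂ) : ∃ X, IsMoorePenrose A X := by
  set G : Matrix n n ℂ := Aᴴ * A with hGdef
  have hGh : Gᴴ = G := (isHermitian_conjTranspose_mul_self A).eq
  obtain ⟨Y, hGYG, hYGY, hYh, hcomm⟩ := herm_pinv_exists G (isHermitian_conjTranspose_mul_self A)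
  have hAYGH : (A * Y * G)ᴴ = G * (Y * Aᴴ) := by
    rw [conjTranspose_mul, hGh, conjTranspose_mul, hYh]
  have t2 : G * (Y * Aᴴ) * A = G := by
    calc G * (Y * Aᴴ) * A = G * Y * G := by rw [hGdef]; simp only [Matrix.mul_assoc]
    _ = G := hGYG
  have t3 : Aᴴ * (A * Y * G) = G := by
    calc Aᴴ * (A * Y * G) = G * Y * G := by rw [hGdef]; simp only [Matrix.mul_assoc]
    _ = G := hGYG
  have t1 : G * (Y * Aᴴ) * (A * Y * G) = G := by
    calc G * (Y * Aᴴ) * (A * Y * G) = (G * (Y * Aᴴ) * A) * (Y * G) := by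
          simp only [Matrix.mul_assoc]
    _ = G * (Y * G) := by rw [t2]
    _ = G := by rw [← Matrix.mul_assoc, hGYG]
  have hz : (A * Y * G - A)ᴴ * (A * Y * G - A) = 0 := by
    rw [conjTranspose_sub, hAYGH, Matrix.sub_mul, Matrix.mul_sub, Matrix.mul_sub,
      t1, t2, t3, ← hGdef]
    simp
  have key : A * Y * G = A := by
    have := Matrix.conjTranspose_mul_self_eq_zero.mp hz
    exact sub_eq_zero.mp this
  refine ⟨Y * Aᴴ, ?_, ?_, ?_, ?_⟩
  · calc A * (Y * Aᴴ) * A = A * Y * G := by rw [hGdef]; simp only [Matrix.mul_assoc]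
    _ = A := key
  · calc Y * Aᴴ * A * (Y * Aᴴ) = (Y * G * Y) * Aᴴ := by
          rw [hGdef]; simp only [Matrix.mul_assoc]
    _ = Y * Aᴴ := by rw [hYGY]
  · calc (A * (Y * Aᴴ))ᴴ = A * Yᴴ * Aᴴ := by
          simp [conjTranspose_mul, Matrix.mul_assoc]
    _ = A * (Y * Aᴴ) := by rw [hYh, Matrix.mul_assoc]
  · calc (Y * Aᴴ * A)ᴴ = Gᴴ * Yᴴ := by
          rw [hGdef, Matrix.mul_assoc, conjTranspose_mul]
    _ = Y * Aᴴ * A := by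
          rw [hGh, hYh, hcomm, hGdef, Matrix.mul_assoc]

lemma pinv_isMoorePenrose {m n : Type*} [Fintype m] [Fintype n] [DecidableEq n]
    (A : Matrix m n ℂ) : IsMoorePenrose A (pinv A) := by
  rw [pinv, dif_pos (exists_isMoorePenrose A)]
  exact (exists_isMoorePenrose A).choose_spec

theorem hermitian_solution_AXAstar_eq_B {m n : ℕ} (A : Matrix (Fin m) (Fin n) ℂ)
    (B : Matrix (Fin m) (Fin m) ℂ) (hB : B.IsHermitian) :
    ((∃ X : Matrix (Fin n) (Fin n) ℂ, X.IsHermitian ∧ A * X * Aᴴ = B) ↔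
      LinearMap.range B.mulVecLin ≤ LinearMap.range A.mulVecLin) ∧
    (LinearMap.range B.mulVecLin ≤ LinearMap.range A.mulVecLin ↔ A * pinv A * B = B) ∧
    (LinearMap.range B.mulVecLin ≤ LinearMap.range A.mulVecLin →
      ((pinv A * B * (pinv A)ᴴ).IsHermitian ∧ A * (pinv A * B * (pinv A)ᴴ) * Aᴴ = B) ∧
      ∀ V : Matrix (Fin n) (Fin n) ℂ,
        (pinv A * B * (pinv A)ᴴ + (1 - pinv A * A) * V + Vᴴ * (1 - pinv A * A)).IsHermitian →
        A * (pinv A * B * (pinv A)ᴴ + (1 - pinv A * A) * V + Vᴴ * (1 - pinv A * A)) * Aᴴ = B) := by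
  obtain ⟨hAPA, hPAP, hAPh, hPAh⟩ := pinv_isMoorePenrose A
  set P := pinv A with hP
  -- range condition implies A * P * B = B
  have range_imp : LinearMap.range B.mulVecLin ≤ LinearMap.range A.mulVecLin →
      A * P * B = B := by
    intro h
    ext i j
    have : B.mulVecLin (Pi.single j 1) ∈ LinearMap.range A.mulVecLin := h ⟨Pi.single j 1, rfl⟩
    obtain ⟨w, hw⟩ := this
    have h2 : (A * P * B).mulVecLin (Pi.single j 1) = B.mulVecLin (Pi.single j 1) := by
      calc (A * P * B).mulVecLin (Pi.single j 1)
          = (A * P).mulVecLin (B.mulVecLin (Pi.single j 1)) := by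
            simp [Matrix.mulVecLin_mul]
      _ = (A * P).mulVecLin (A.mulVecLin w) := by rw [hw]
      _ = (A * P * A).mulVecLin w := by simp [Matrix.mulVecLin_mul]
      _ = A.mulVecLin w := by rw [hAPA]
      _ = B.mulVecLin (Pi.single j 1) := hw
    have h3 := congrFun h2 i
    rw [Matrix.mulVecLin_apply, Matrix.mulVecLin_apply, Matrix.mulVec_single_one,
      Matrix.mulVec_single_one] at h3
    simpa using h3
  have APB_imp : A * P * B = B → LinearMap.range B.mulVecLin ≤ LinearMap.range A.mulVecLin := by
    intro h v hv
    obtain ⟨u, hu⟩ := hv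
    refine ⟨P.mulVecLin (B.mulVecLin u), ?_⟩
    rw [← hu]
    calc A.mulVecLin (P.mulVecLin (B.mulVecLin u)) = (A * P * B).mulVecLin u := by
          simp [Matrix.mulVecLin_mul]
    _ = B.mulVecLin u := by rw [h]
  -- A * (P*B*Pᴴ) * Aᴴ = B whenever A*P*B = B
  have X0_sol : A * P * B = B → A * (P * B * Pᴴ) * Aᴴ = B := by
    intro h
    have hBP : B * (A * P) = B := by
      have h' : (A * P * B)ᴴ = Bᴴ := congrArg conjTranspose h
      rw [conjTranspose_mul, hAPh, hB.eq] at h'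
      exact h'
    calc A * (P * B * Pᴴ) * Aᴴ = (A * P * B) * (Pᴴ * Aᴴ) := by simp only [Matrix.mul_assoc]
    _ = B * (A * P) := by rw [h, ← conjTranspose_mul, hAPh]
    _ = B := hBP
  refine ⟨⟨?_, ?_⟩, ⟨range_imp, APB_imp⟩, ?_⟩
  · rintro ⟨X, _, hX⟩ v hv
    obtain ⟨u, hu⟩ := hv
    refine ⟨(X * Aᴴ).mulVecLin u, ?_⟩
    rw [← hu]
    calc A.mulVecLin ((X * Aᴴ).mulVecLin u) = (A * (X * Aᴴ)).mulVecLin u := by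
          simp [Matrix.mulVecLin_mul]
    _ = B.mulVecLin u := by rw [← Matrix.mul_assoc, hX]
  · intro h
    exact ⟨P * B * Pᴴ, by
      constructor
      · show (P * B * Pᴴ)ᴴ = P * B * Pᴴ
        simp only [conjTranspose_mul, conjTranspose_conjTranspose, hB.eq, Matrix.mul_assoc]
      · exact X0_sol (range_imp h)⟩
  · intro h
    have hAPB := range_imp h
    have h1 : A * (1 - P * A) = 0 := by
      rw [Matrix.mul_sub, Matrix.mul_one, ← Matrix.mul_assoc, hAPA, sub_self]
    have hsym : (1 - P * A)ᴴ = 1 - P * A := by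
      rw [conjTranspose_sub, conjTranspose_one, hPAh]
    have h2 : (1 - P * A) * Aᴴ = 0 := by
      have h' := congrArg conjTranspose h1
      rw [conjTranspose_mul, hsym, conjTranspose_zero] at h'
      exact h'
    refine ⟨⟨?_, X0_sol hAPB⟩, ?_⟩
    · show (P * B * Pᴴ)ᴴ = P * B * Pᴴ
      simp only [conjTranspose_mul, conjTranspose_conjTranspose, hB.eq, Matrix.mul_assoc]
    · intro V _
      have e : A * (P * B * Pᴴ + (1 - P * A) * V + Vᴴ * (1 - P * A)) * Aᴴ
          = A * (P * B * Pᴴ) * Aᴴ + A * ((1 - P * A) * V) * Aᴴ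
            + A * (Vᴴ * (1 - P * A)) * Aᴴ := by
        rw [Matrix.mul_add, Matrix.mul_add, Matrix.add_mul, Matrix.add_mul]
      have z1 : A * ((1 - P * A) * V) * Aᴴ = 0 := by
        rw [← Matrix.mul_assoc, h1]
        simp
      have z2 : A * (Vᴴ * (1 - P * A)) * Aᴴ = 0 := by
        rw [Matrix.mul_assoc, Matrix.mul_assoc, h2]
        simp
      rw [e, z1, z2, X0_sol hAPB]
      simp
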